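/- Let n ≥ 1 and N ≥ 1 be integers and let P ∈ ℚ[x₁, …, xₙ] be a polynomial, written as a finite sum P = Σ_a λ_a x₁^{a₁−1}⋯xₙ^{aₙ−1} over multi-indices a = (a₁, …, aₙ) with all aᵢ ≥ 1 and λ_a ∈ ℚ. Assume the function F = P/(1 − x₁⋯xₙ)^N is Lebesgue-integrable on (0,1)ⁿ. Define R : ℕ → ℚ by R(k) = Σ_a λ_a · C(k+N−1, N−1) / ((k+a₁)(k+a₂)⋯(k+aₙ)), where C(·,·) denotes the binomial coefficient. Then the series Σ_{k=0}^∞ R(k) converges absolutely and ∫_{(0,1)ⁿ} F dx₁⋯dxₙ = Σ_{k=0}^∞ R(k). -/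

import Mathlib

open MeasureTheory

/-- The open unit cube `(0,1)^n` in `ℝ^n`. -/
def unitCube (n : ℕ) : Set (Fin n → ℝ) := Set.univ.pi fun _ => Set.Ioo (0 : ℝ) 1

lemma unitCube_measurableSet (n : ℕ) : MeasurableSet (unitCube n) :=
  MeasurableSet.univ_pi fun _ => measurableSet_Ioo

lemma indicator_key (n : ℕ) (b : Fin n → ℕ) :
    (unitCube n).indicator (fun x : Fin n → ℝ => ∏ i, x i ^ b i)
      = fun x => ∏ i, (Set.Ioo (0:ℝ) 1).indicator (fun y => y ^ b i) (x i) := by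
  funext x
  by_cases hx : x ∈ unitCube n
  · rw [Set.indicator_of_mem hx]
    exact Finset.prod_congr rfl fun i _ =>
      (Set.indicator_of_mem (hx i (Set.mem_univ i)) _).symm
  · rw [Set.indicator_of_notMem hx]
    have : ∃ i, x i ∉ Set.Ioo (0:ℝ) 1 := by
      by_contra hcon
      push_neg at hcon
      exact hx fun i _ => hcon i
    obtain ⟨i, hi⟩ := this
    exact (Finset.prod_eq_zero (Finset.mem_univ i) (Set.indicator_of_notMem hi _)).symm

lemma factor_integrable (b : ℕ) :
    Integrable ((Set.Ioo (0:ℝ) 1).indicator (fun y => y ^ b)) := by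
  rw [integrable_indicator_iff measurableSet_Ioo]
  exact ((continuous_pow b).integrableOn_Icc).mono_set Set.Ioo_subset_Icc_self

lemma mono_integrableOn (n : ℕ) (b : Fin n → ℕ) :
    IntegrableOn (fun x : Fin n → ℝ => ∏ i, x i ^ b i) (unitCube n) := by
  have H := Integrable.fintype_prod (𝕜 := ℝ) fun i => factor_integrable (b i)
  rw [← indicator_key n b] at H
  exact (integrable_indicator_iff (unitCube_measurableSet n)).1 H

lemma mono_integral (n : ℕ) (b : Fin n → ℕ) :
    ∫ x in unitCube n, ∏ i, x i ^ b i = ∏ i, (1:ℝ)/((b i : ℝ) + 1) := by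
  rw [← integral_indicator (unitCube_measurableSet n), indicator_key]
  beta_reduce
  rw [volume_pi, integral_fintype_prod_eq_prod (𝕜 := ℝ) (f := fun i (y : ℝ) =>
      (Set.Ioo (0:ℝ) 1).indicator (fun y => y ^ b i) y)]
  refine Finset.prod_congr rfl fun i _ => ?_
  rw [integral_indicator measurableSet_Ioo, ← integral_Ioc_eq_integral_Ioo,
    ← intervalIntegral.integral_of_le (zero_le_one), integral_pow]
  norm_num

theorem stmt14 (n N m : ℕ) (hn : 1 ≤ n) (hN : 1 ≤ N)
    (a : Fin m → Fin n → ℕ) (ha : ∀ j i, 1 ≤ a j i) (lam : Fin m → ℚ)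
    (hint : IntegrableOn (fun x : Fin n → ℝ =>
      (∑ j, (lam j : ℝ) * ∏ i, x i ^ (a j i - 1)) / (1 - ∏ i, x i) ^ N) (unitCube n)) :
    Summable (fun k : ℕ =>
      |∑ j, (lam j : ℝ) * (Nat.choose (k + N - 1) (N - 1) : ℝ)
        / ∏ i, ((k : ℝ) + (a j i : ℝ))|) ∧
    (∫ x in unitCube n,
        (∑ j, (lam j : ℝ) * ∏ i, x i ^ (a j i - 1)) / (1 - ∏ i, x i) ^ N)
      = ∑' k : ℕ, ∑ j, (lam j : ℝ) * (Nat.choose (k + N - 1) (N - 1) : ℝ)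
          / ∏ i, ((k : ℝ) + (a j i : ℝ)) := by
  have mUC := unitCube_measurableSet n
  have hN' : N - 1 + 1 = N := by omega
  -- the k-th term as a function of x
  set h : ℕ → (Fin n → ℝ) → ℝ := fun k x =>
    ∑ j, ((lam j : ℝ) * (Nat.choose (k + N - 1) (N - 1) : ℝ)) * ∏ i, x i ^ (a j i - 1 + k)
    with hh
  have hInt : ∀ k, IntegrableOn (h k) (unitCube n) := fun k =>
    integrable_finset_sum _ fun j _ => (mono_integrableOn n _).const_mul _
  -- value of the integral of h k
  have hIntegral : ∀ k, (∫ x in unitCube n, h k x)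
      = ∑ j, (lam j : ℝ) * (Nat.choose (k + N - 1) (N - 1) : ℝ)
          / ∏ i, ((k : ℝ) + (a j i : ℝ)) := by
    intro k
    rw [hh]
    rw [integral_finset_sum _ fun j _ => (mono_integrableOn n _).const_mul _]
    refine Finset.sum_congr rfl fun j _ => ?_
    rw [integral_const_mul, mono_integral]
    have : ∏ i, ((1:ℝ)/(((a j i - 1 + k : ℕ) : ℝ) + 1)) = 1 / ∏ i, ((k:ℝ) + (a j i : ℝ)) := by
      rw [Finset.prod_div_distrib, Finset.prod_const_one]
      congr 1
      refine Finset.prod_congr rfl fun i _ => ?_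
      have h1 : ((a j i - 1 + k : ℕ) : ℝ) = (a j i : ℝ) - 1 + k := by
        rw [Nat.cast_add, Nat.cast_sub (ha j i), Nat.cast_one]
      rw [h1]; ring
    rw [this, mul_one_div]
  -- rewriting of h k x as P x * (c k * t ^ k)
  have hform : ∀ (k : ℕ) (x : Fin n → ℝ),
      (∑ j, (lam j : ℝ) * ∏ i, x i ^ (a j i - 1)) *
        (((k + (N - 1)).choose (N - 1) : ℝ) * (∏ i, x i) ^ k) = h k x := by
    intro k x
    have hkN : k + (N - 1) = k + N - 1 := by omega
    rw [hh, hkN, Finset.sum_mul]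
    refine Finset.sum_congr rfl fun j _ => ?_
    simp only [pow_add, Finset.prod_mul_distrib, Finset.prod_pow]
    ring
  -- pointwise HasSum on the cube
  have hHS : ∀ x ∈ unitCube n, HasSum (fun k => h k x)
      ((∑ j, (lam j : ℝ) * ∏ i, x i ^ (a j i - 1)) / (1 - ∏ i, x i) ^ N) := by
    intro x hx
    have hx' : ∀ i, x i ∈ Set.Ioo (0:ℝ) 1 := fun i => hx i (Set.mem_univ i)
    have ht0 : 0 ≤ ∏ i, x i := Finset.prod_nonneg fun i _ => (hx' i).1.le
    have : Nonempty (Fin n) := ⟨⟨0, hn⟩⟩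
    have ht1 : ∏ i, x i < 1 := by
      calc ∏ i, x i < ∏ _i : Fin n, (1:ℝ) :=
            Finset.prod_lt_prod_of_nonempty (fun i _ => (hx' i).1) (fun i _ => (hx' i).2)
              Finset.univ_nonempty
        _ = 1 := Finset.prod_const_one
    have hnorm : ‖∏ i, x i‖ < 1 := by
      rw [Real.norm_eq_abs, abs_of_nonneg ht0]; exact ht1
    have H := (hasSum_choose_mul_geometric_of_norm_lt_one (𝕜 := ℝ) (N-1) hnorm).mul_left
      (∑ j, (lam j : ℝ) * ∏ i, x i ^ (a j i - 1))
    rw [funext (hform · x)] at H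
    rwa [hN', mul_one_div] at H
  -- |F x| on the cube
  have hFabs : ∀ x ∈ unitCube n,
      ‖(∑ j, (lam j : ℝ) * ∏ i, x i ^ (a j i - 1)) / (1 - ∏ i, x i) ^ N‖
        = |∑ j, (lam j : ℝ) * ∏ i, x i ^ (a j i - 1)| * (1 / (1 - ∏ i, x i) ^ N) := by
    intro x hx
    have hx' : ∀ i, x i ∈ Set.Ioo (0:ℝ) 1 := fun i => hx i (Set.mem_univ i)
    have ht0 : 0 ≤ ∏ i, x i := Finset.prod_nonneg fun i _ => (hx' i).1.le
    have : Nonempty (Fin n) := ⟨⟨0, hn⟩⟩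
    have ht1 : ∏ i, x i < 1 := by
      calc ∏ i, x i < ∏ _i : Fin n, (1:ℝ) :=
            Finset.prod_lt_prod_of_nonempty (fun i _ => (hx' i).1) (fun i _ => (hx' i).2)
              Finset.univ_nonempty
        _ = 1 := Finset.prod_const_one
    have hpos : (0:ℝ) < (1 - ∏ i, x i) ^ N := pow_pos (by linarith) N
    rw [Real.norm_eq_abs, abs_div, abs_of_pos hpos, div_eq_mul_one_div]
  -- summability of the integrals of the norms
  have hsum_norm : Summable (fun k => ∫ x in unitCube n, ‖h k x‖) := by
    apply summable_of_sum_range_le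
      (c := ∫ x in unitCube n,
        ‖(∑ j, (lam j : ℝ) * ∏ i, x i ^ (a j i - 1)) / (1 - ∏ i, x i) ^ N‖)
      (fun k => integral_nonneg fun x => norm_nonneg _)
    intro K
    rw [← integral_finset_sum _ fun k _ => (hInt k).norm]
    refine setIntegral_mono_on (integrable_finset_sum _ fun k _ => (hInt k).norm)
      hint.norm mUC ?_
    intro x hx
    have hx' : ∀ i, x i ∈ Set.Ioo (0:ℝ) 1 := fun i => hx i (Set.mem_univ i)
    have ht0 : 0 ≤ ∏ i, x i := Finset.prod_nonneg fun i _ => (hx' i).1.le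
    have : Nonempty (Fin n) := ⟨⟨0, hn⟩⟩
    have ht1 : ∏ i, x i < 1 := by
      calc ∏ i, x i < ∏ _i : Fin n, (1:ℝ) :=
            Finset.prod_lt_prod_of_nonempty (fun i _ => (hx' i).1) (fun i _ => (hx' i).2)
              Finset.univ_nonempty
        _ = 1 := Finset.prod_const_one
    have hnorm : ‖∏ i, x i‖ < 1 := by
      rw [Real.norm_eq_abs, abs_of_nonneg ht0]; exact ht1
    have Hc := hasSum_choose_mul_geometric_of_norm_lt_one (𝕜 := ℝ) (N-1) hnorm
    rw [hN'] at Hc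
    have hck : ∀ k : ℕ, (0:ℝ) ≤ ((k + (N - 1)).choose (N - 1) : ℝ) * (∏ i, x i) ^ k :=
      fun k => mul_nonneg (Nat.cast_nonneg _) (pow_nonneg ht0 k)
    have habs : ∀ k : ℕ, ‖h k x‖
        = |∑ j, (lam j : ℝ) * ∏ i, x i ^ (a j i - 1)| *
            (((k + (N - 1)).choose (N - 1) : ℝ) * (∏ i, x i) ^ k) := by
      intro k
      rw [Real.norm_eq_abs, ← hform k x, abs_mul, abs_of_nonneg (hck k)]
    calc ∑ k ∈ Finset.range K, ‖h k x‖
        = |∑ j, (lam j : ℝ) * ∏ i, x i ^ (a j i - 1)| *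
            ∑ k ∈ Finset.range K, (((k + (N - 1)).choose (N - 1) : ℝ) * (∏ i, x i) ^ k) := by
          rw [Finset.mul_sum]; exact Finset.sum_congr rfl fun k _ => habs k
      _ ≤ |∑ j, (lam j : ℝ) * ∏ i, x i ^ (a j i - 1)| * (1 / (1 - ∏ i, x i) ^ N) := by
          refine mul_le_mul_of_nonneg_left ?_ (abs_nonneg _)
          exact sum_le_hasSum _ (fun k _ => hck k) Hc
      _ = ‖(∑ j, (lam j : ℝ) * ∏ i, x i ^ (a j i - 1)) / (1 - ∏ i, x i) ^ N‖ :=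
          (hFabs x hx).symm
  constructor
  · refine Summable.of_nonneg_of_le (fun k => abs_nonneg _) (fun k => ?_) hsum_norm
    rw [← hIntegral k, ← Real.norm_eq_abs]
    exact norm_integral_le_integral_norm _
  · have heq1 : (∫ x in unitCube n,
        (∑ j, (lam j : ℝ) * ∏ i, x i ^ (a j i - 1)) / (1 - ∏ i, x i) ^ N)
        = ∫ x in unitCube n, ∑' k, h k x :=
      setIntegral_congr_fun mUC fun x hx => ((hHS x hx).tsum_eq).symm
    rw [heq1, ← integral_tsum_of_summable_integral_norm hInt hsum_norm]
    exact tsum_congr hIntegral
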